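/- arXiv:1801.09139 — 4 statements merged into one kernel-verified Lean document; each statement's English description precedes it below -/
import Mathlib

section
/- Serre's bound is attained: for any d with 1 ≤ d ≤ q, the homogeneous polynomial F(x_0,...,x_m) = (x_1 - a_1 x_0)···(x_1 - a_d x_0), where a_1,...,a_d are distinct elements of F_q, has exactly d*q^{m-1} + p_{m-2} zeros in P^m(F_q). -/
open MvPolynomial Finset

/-- Reduce an exponent modulo `q-1`: unchanged if `≤ q-1`, otherwise the
representative in `{1,...,q-1}` congruent to it modulo `q-1`. -/
def redExp (q a : ℕ) : ℕ := if a ≤ q - 1 then a else (a - 1) % (q - 1) + 1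

/-- Projective reduction of a monomial (given by its exponent vector): all exponents
below the top variable of the support are reduced modulo `q-1`, and the difference is
transferred to the exponent of the top variable. -/
noncomputable def projRed (q : ℕ) {m : ℕ} (μ : Fin (m + 1) →₀ ℕ) : Fin (m + 1) →₀ ℕ :=
  if h : μ.support.Nonempty then
    letI ℓ := μ.support.max' h
    Finsupp.equivFunOnFinite.symm fun i =>
      if i < ℓ then redExp q (μ i)
      else if i = ℓ then μ ℓ + ∑ j ∈ Finset.univ.filter (· < ℓ), (μ j - redExp q (μ j))
      else 0
  else 0

/-- Projective reduction of a polynomial: the linear extension of projective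
reduction of monomials. -/
noncomputable def polyRed (q : ℕ) {m : ℕ} {k : Type} [CommRing k]
    (f : MvPolynomial (Fin (m + 1)) k) : MvPolynomial (Fin (m + 1)) k :=
  f.support.sum fun μ => monomial (projRed q μ) (coeff μ f)

/-- The ideal generated by the Fermat polynomials `X i ^ q * X j - X i * X j ^ q`. -/
noncomputable def fermatIdeal (q m : ℕ) (k : Type) [CommRing k] : Ideal (MvPolynomial (Fin (m + 1)) k) :=
  Ideal.span {f | ∃ i j : Fin (m + 1), i < j ∧ f = X i ^ q * X j - X i * X j ^ q}

/-- The leading exponent (exponent vector of the leading monomial) of a multivariate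
polynomial with respect to a monomial order. -/
noncomputable def lmExp {σ : Type} (mo : MonomialOrder σ) {R : Type} [CommSemiring R]
    (f : MvPolynomial σ R) : σ →₀ ℕ :=
  mo.toSyn.symm (f.support.sup fun μ => mo.toSyn μ)


/-- fibers of the projectivization quotient restricted to a predicate. -/
noncomputable def projFiberEquiv {K V : Type*} [Field K] [AddCommGroup V] [Module K V]
    (pred : Projectivization K V → Prop) :
    {v : {v : V // v ≠ 0} // pred (Projectivization.mk' K v)} ≃
      {P : Projectivization K V // pred P} × Kˣ := by
  classical
  let f : {v : {v : V // v ≠ 0} // pred (Projectivization.mk' K v)} →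
      {P : Projectivization K V // pred P} := fun v => ⟨Projectivization.mk' K v.1, v.2⟩
  refine ((Equiv.sigmaFiberEquiv f).symm.trans (Equiv.sigmaCongrRight fun P => ?_)).trans
    (Equiv.sigmaEquivProd _ _)
  refine (Equiv.ofBijective (fun c : Kˣ => ?_) ⟨?_, ?_⟩).symm
  · refine ⟨⟨⟨(c : K) • P.1.rep, smul_ne_zero c.ne_zero P.1.rep_nonzero⟩, ?_⟩, ?_⟩
    · have : Projectivization.mk' K ⟨(c : K) • P.1.rep, smul_ne_zero c.ne_zero P.1.rep_nonzero⟩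
          = P.1 := by
        rw [Projectivization.mk'_eq_mk]
        rw [show Projectivization.mk K ((c : K) • P.1.rep) _ = Projectivization.mk K P.1.rep
            P.1.rep_nonzero from (Projectivization.mk_eq_mk_iff K _ _ _ _).2 ⟨c, rfl⟩]
        exact P.1.mk_rep
      rw [this]; exact P.2
    · apply Subtype.ext
      show Projectivization.mk' K _ = P.1
      rw [Projectivization.mk'_eq_mk]
      rw [show Projectivization.mk K ((c : K) • P.1.rep) _ = Projectivization.mk K P.1.rep
          P.1.rep_nonzero from (Projectivization.mk_eq_mk_iff K _ _ _ _).2 ⟨c, rfl⟩]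
      exact P.1.mk_rep
  · intro c₁ c₂ h
    have h' : (c₁ : K) • P.1.rep = (c₂ : K) • P.1.rep := by
      have := congrArg (fun x => ((x.1 : {v : V // v ≠ 0}) : V)) h
      exact this
    ext
    have h2 : ((c₁ : K) - c₂) • P.1.rep = 0 := by rw [sub_smul, h', sub_self]
    rcases smul_eq_zero.1 h2 with h3 | h3
    · exact sub_eq_zero.1 h3
    · exact absurd h3 P.1.rep_nonzero
  · rintro ⟨⟨⟨v, hv⟩, hp⟩, hfp⟩
    have hmk : Projectivization.mk' K ⟨v, hv⟩ = P.1 := congrArg Subtype.val hfp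
    rw [Projectivization.mk'_eq_mk] at hmk
    have hm : Projectivization.mk K v hv = Projectivization.mk K P.1.rep P.1.rep_nonzero := by
      rw [P.1.mk_rep]; exact hmk
    obtain ⟨c, hc⟩ := (Projectivization.mk_eq_mk_iff K _ _ _ _).1 hm
    refine ⟨c, ?_⟩
    apply Subtype.ext; apply Subtype.ext; apply Subtype.ext
    exact hc


lemma cons2_self {m : ℕ} {K : Type*} (v : Fin (m + 2) → K) :
    Fin.cons (v 0) (Fin.cons (v 1) fun j : Fin m => v j.succ.succ) = v := by
  funext j
  refine Fin.cases rfl (fun j' => ?_) j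
  refine Fin.cases ?_ (fun j'' => ?_) j'
  · rw [Fin.cons_succ, Fin.cons_zero, Fin.succ_zero_eq_one]
  · rw [Fin.cons_succ, Fin.cons_succ]

noncomputable def affineEquiv {m d : ℕ} {K : Type*} [Field K] (a : Fin d → K)
    (ha : Function.Injective a) :
    {v : Fin (m + 2) → K // (v ≠ 0 ∧ ∃ i, v 1 = a i * v 0) ∧ v 0 ≠ 0} ≃
      Kˣ × Fin d × (Fin m → K) := by
  classical
  refine (Equiv.ofBijective (fun p : Kˣ × Fin d × (Fin m → K) =>
    (⟨Fin.cons (p.1 : K) (Fin.cons (a p.2.1 * p.1) p.2.2), ?_, ?_⟩ :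
      {v : Fin (m + 2) → K // (v ≠ 0 ∧ ∃ i, v 1 = a i * v 0) ∧ v 0 ≠ 0})) ⟨?_, ?_⟩).symm
  · constructor
    · intro h
      have := congrFun h 0
      simp [Fin.cons_zero] at this
    · refine ⟨p.2.1, ?_⟩
      rw [show (1 : Fin (m + 2)) = (0 : Fin (m+1)).succ from (Fin.succ_zero_eq_one).symm]
      simp [Fin.cons_succ, Fin.cons_zero]
  · rw [Fin.cons_zero]; exact p.1.ne_zero
  · rintro ⟨c, i, w⟩ ⟨c', i', w'⟩ h
    have h' := congrArg Subtype.val h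
    have h0 := congrFun h' 0
    simp only [Fin.cons_zero] at h0
    have h1 := congrFun h' ((0 : Fin (m+1)).succ)
    simp only [Fin.cons_succ, Fin.cons_zero] at h1
    have hw : w = w' := by
      funext j
      have := congrFun h' j.succ.succ
      simpa only [Fin.cons_succ] using this
    have hc : c = c' := Units.ext h0
    have hi : i = i' := by
      apply ha
      have : a i * (c : K) = a i' * c := by rw [h1, h0]
      exact mul_right_cancel₀ c.ne_zero this
    simp [hc, hi, hw]
  · rintro ⟨v, ⟨hv0, i, hi⟩, h0⟩
    refine ⟨⟨Units.mk0 (v 0) h0, i, fun j => v j.succ.succ⟩, ?_⟩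
    apply Subtype.ext
    show Fin.cons (v 0) (Fin.cons (a i * v 0) fun j : Fin m => v j.succ.succ) = v
    rw [← hi]
    exact cons2_self v

noncomputable def vanishEquiv {m d : ℕ} {K : Type*} [Field K] (a : Fin d → K) (hd1 : 1 ≤ d) :
    {v : Fin (m + 2) → K // (v ≠ 0 ∧ ∃ i, v 1 = a i * v 0) ∧ v 0 = 0} ≃
      {w : Fin m → K // w ≠ 0} := by
  classical
  refine (Equiv.ofBijective (fun p : {w : Fin m → K // w ≠ 0} =>
    (⟨Fin.cons 0 (Fin.cons 0 p.1), ⟨?_, ?_⟩, Fin.cons_zero _ _⟩ :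
      {v : Fin (m + 2) → K // (v ≠ 0 ∧ ∃ i, v 1 = a i * v 0) ∧ v 0 = 0})) ⟨?_, ?_⟩).symm
  · intro h
    apply p.2
    funext j
    have := congrFun h j.succ.succ
    simpa only [Fin.cons_succ, Pi.zero_apply] using this
  · refine ⟨⟨0, hd1⟩, ?_⟩
    rw [show (1 : Fin (m + 2)) = (0 : Fin (m+1)).succ from (Fin.succ_zero_eq_one).symm]
    simp [Fin.cons_succ, Fin.cons_zero]
  · rintro ⟨w, hw⟩ ⟨w', hw'⟩ h
    have h' := congrArg Subtype.val h
    apply Subtype.ext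
    funext j
    have := congrFun h' j.succ.succ
    simpa only [Fin.cons_succ] using this
  · rintro ⟨v, ⟨hv0, i, hi⟩, h0⟩
    have h1 : v 1 = 0 := by rw [hi, h0, mul_zero]
    refine ⟨⟨fun j => v j.succ.succ, ?_⟩, ?_⟩
    · intro h
      apply hv0
      rw [← cons2_self v, h0, h1, h]
      funext j
      refine Fin.cases rfl (fun j' => ?_) j
      refine Fin.cases rfl (fun j'' => ?_) j'
      simp
    · apply Subtype.ext
      show Fin.cons 0 (Fin.cons 0 fun j : Fin m => v j.succ.succ) = v
      nth_rewrite 2 [← h1]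
      nth_rewrite 1 [← h0]
      exact cons2_self v

/-- Serre's bound is attained: for distinct `a_1, ..., a_d` in `F_q` with `1 ≤ d ≤ q`, the
polynomial `(x_1 - a_1 x_0) ⋯ (x_1 - a_d x_0)` has exactly `d * q^(m-1) + p_{m-2}` zeros
in `P^m(F_q)`. -/
theorem serre_bound_attained (q m d : ℕ) (hm : 1 ≤ m)
    (K : Type) [Field K] [Fintype K] (hq : Fintype.card K = q)
    (a : Fin d → K) (ha : Function.Injective a) (hd1 : 1 ≤ d) (hdq : d ≤ q) :
    Nat.card {P : Projectivization K (Fin (m + 1) → K) //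
        MvPolynomial.eval P.rep (∏ i : Fin d, (X (1 : Fin (m + 1)) - C (a i) * X 0)) = 0}
      = d * q ^ (m - 1) + ∑ i ∈ Finset.range (m - 1), q ^ i := by
  classical
  obtain ⟨m', rfl⟩ : ∃ m'', m = m'' + 1 := ⟨m - 1, (Nat.succ_pred_eq_of_pos hm).symm⟩
  simp only [Nat.add_sub_cancel]
  have hq2 : 2 ≤ q := hq ▸ Fintype.one_lt_card
  set F : MvPolynomial (Fin (m' + 1 + 1)) K :=
    ∏ i : Fin d, (X (1 : Fin (m' + 1 + 1)) - C (a i) * X 0) with hF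
  have hevalF : ∀ v : Fin (m' + 1 + 1) → K, eval v F = ∏ i : Fin d, (v 1 - a i * v 0) := by
    intro v
    rw [hF, map_prod]
    refine prod_congr rfl fun i _ => ?_
    simp
  have heval0 : ∀ v : Fin (m' + 1 + 1) → K, (eval v F = 0 ↔ ∃ i, v 1 = a i * v 0) := by
    intro v
    rw [hevalF, prod_eq_zero_iff]
    simp [sub_eq_zero]
  have hsmul : ∀ (c : K) (v : Fin (m' + 1 + 1) → K), eval (c • v) F = c ^ d * eval v F := by
    intro c v
    rw [hevalF, hevalF]
    calc ∏ i : Fin d, ((c • v) 1 - a i * (c • v) 0)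
        = ∏ i : Fin d, (c * (v 1 - a i * v 0)) := by
          refine prod_congr rfl fun i _ => ?_
          simp only [Pi.smul_apply, smul_eq_mul]
          ring
      _ = c ^ d * ∏ i : Fin d, (v 1 - a i * v 0) := by
          rw [prod_mul_distrib, prod_const, card_univ, Fintype.card_fin]
  have predIff : ∀ v : {v : Fin (m' + 1 + 1) → K // v ≠ 0},
      (eval (Projectivization.mk' K v).rep F = 0 ↔ ∃ i, (v : Fin (m' + 1 + 1) → K) 1 =
        a i * (v : Fin (m' + 1 + 1) → K) 0) := by
    intro v
    have hmk : Projectivization.mk K (Projectivization.mk' K v).rep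
        (Projectivization.rep_nonzero _) = Projectivization.mk K v.1 v.2 := by
      rw [Projectivization.mk_rep, Projectivization.mk'_eq_mk]
    obtain ⟨c, hc⟩ := (Projectivization.mk_eq_mk_iff K _ _ _ _).1 hmk
    rw [← heval0]
    rw [← hc, Units.smul_def, hsmul]
    have hcd : (c : K) ^ d ≠ 0 := pow_ne_zero d c.ne_zero
    simp [mul_eq_zero, hcd]
  -- the key fibration count
  have e1 : {P : Projectivization K (Fin (m' + 1 + 1) → K) // eval P.rep F = 0} × Kˣ ≃
      {v : Fin (m' + 1 + 1) → K // v ≠ 0 ∧ ∃ i, v 1 = a i * v 0} :=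
    (projFiberEquiv _).symm.trans ((Equiv.subtypeEquivRight predIff).trans
      (Equiv.subtypeSubtypeEquivSubtypeInter (fun v : Fin (m' + 1 + 1) → K => v ≠ 0)
        (fun v => ∃ i, v 1 = a i * v 0)))
  have esplit : {v : Fin (m' + 1 + 1) → K // v ≠ 0 ∧ ∃ i, v 1 = a i * v 0} ≃
      {w : Fin m' → K // w ≠ 0} ⊕ (Kˣ × Fin d × (Fin m' → K)) :=
    (Equiv.sumCompl fun x : {v : Fin (m' + 1 + 1) → K // v ≠ 0 ∧ ∃ i, v 1 = a i * v 0} =>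
        x.1 0 = 0).symm.trans
      (Equiv.sumCongr
        ((Equiv.subtypeSubtypeEquivSubtypeInter
            (fun v : Fin (m' + 1 + 1) → K => v ≠ 0 ∧ ∃ i, v 1 = a i * v 0)
            (fun v => v 0 = 0)).trans (vanishEquiv a hd1))
        ((Equiv.subtypeSubtypeEquivSubtypeInter
            (fun v : Fin (m' + 1 + 1) → K => v ≠ 0 ∧ ∃ i, v 1 = a i * v 0)
            (fun v => v 0 ≠ 0)).trans (affineEquiv a ha)))
  set N := Nat.card {P : Projectivization K (Fin (m' + 1 + 1) → K) // eval P.rep F = 0} with hN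
  have hwcard : Nat.card {w : Fin m' → K // w ≠ 0} = q ^ m' - 1 := by
    rw [Nat.card_eq_fintype_card]
    have := Fintype.card_subtype_compl (fun w : Fin m' → K => w = 0)
    simp only [Fintype.card_subtype_eq] at this
    rw [this, Fintype.card_fun, Fintype.card_fin, hq]
  have key : N * (q - 1) = (q ^ m' - 1) + (q - 1) * (d * q ^ m') := by
    calc N * (q - 1)
        = Nat.card ({P : Projectivization K (Fin (m' + 1 + 1) → K) // eval P.rep F = 0} × Kˣ) := by
          rw [Nat.card_prod, Nat.card_eq_fintype_card (α := Kˣ), Fintype.card_units, hq]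
      _ = Nat.card ({w : Fin m' → K // w ≠ 0} ⊕ (Kˣ × Fin d × (Fin m' → K))) :=
          Nat.card_congr (e1.trans esplit)
      _ = (q ^ m' - 1) + (q - 1) * (d * q ^ m') := by
          rw [Nat.card_sum, hwcard, Nat.card_prod, Nat.card_prod]
          rw [Nat.card_eq_fintype_card (α := Kˣ), Fintype.card_units, hq,
            Nat.card_eq_fintype_card (α := Fin d), Fintype.card_fin,
            Nat.card_eq_fintype_card (α := Fin m' → K), Fintype.card_fun, Fintype.card_fin, hq]
  -- arithmetic
  have h1 : 1 ≤ q := le_trans one_le_two hq2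
  have h2 : 1 ≤ q ^ m' := Nat.one_le_pow _ _ (lt_of_lt_of_le zero_lt_two hq2)
  zify [h1, h2] at key
  have geo : (∑ i ∈ range m', (q : ℤ) ^ i) * ((q : ℤ) - 1) = (q : ℤ) ^ m' - 1 :=
    geom_sum_mul (q : ℤ) m'
  have hne : ((q : ℤ) - 1) ≠ 0 := by
    have : (2 : ℤ) ≤ (q : ℤ) := by exact_mod_cast hq2
    omega
  have expand : ((d : ℤ) * (q : ℤ) ^ m' + ∑ i ∈ range m', (q : ℤ) ^ i) * ((q : ℤ) - 1)
      = (N : ℤ) * ((q : ℤ) - 1) := by linear_combination geo - key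
  have final : (N : ℤ) = (d : ℤ) * (q : ℤ) ^ m' + ∑ i ∈ range m', (q : ℤ) ^ i :=
    (mul_right_cancel₀ hne expand).symm
  exact_mod_cast final
end

section
/- The vanishing ideal over F_q of P^m(F_q) is generated by the Fermat polynomials: a homogeneous polynomial F in F_q[x_0,...,x_m] vanishes at all F_q-rational points of P^m if and only if F lies in the ideal generated by {x_i^q x_j - x_i x_j^q : 0 ≤ i < j ≤ m}. -/
open MvPolynomial Finset

namespace FermatAux

lemma degree_eq_sum_univ {n : ℕ} (f : Fin n →₀ ℕ) : f.degree = ∑ i, f i :=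
  Finset.sum_subset (Finset.subset_univ _)
    (fun i _ hi => Finsupp.notMem_support_iff.mp hi)

variable {q m : ℕ} {K : Type} [CommRing K]

lemma genMem {i j : Fin (m + 1)} (hij : i < j) :
    (X i : MvPolynomial (Fin (m + 1)) K) ^ q * X j - X i * X j ^ q ∈ fermatIdeal q m K :=
  Ideal.subset_span ⟨i, j, hij, rfl⟩

lemma lemA (τ : Fin (m + 1) →₀ ℕ) {i j : Fin (m + 1)} (hij : i < j) (c : K) :
    monomial (τ + Finsupp.single i q + Finsupp.single j 1) c
      - monomial (τ + Finsupp.single i 1 + Finsupp.single j q) c ∈ fermatIdeal q m K := by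
  have hXi : (X i : MvPolynomial (Fin (m + 1)) K) = monomial (Finsupp.single i 1) 1 := by
    rw [← pow_one (X i), X_pow_eq_monomial]
  have hXj : (X j : MvPolynomial (Fin (m + 1)) K) = monomial (Finsupp.single j 1) 1 := by
    rw [← pow_one (X j), X_pow_eq_monomial]
  have key : monomial (τ + Finsupp.single i q + Finsupp.single j 1) c
      - monomial (τ + Finsupp.single i 1 + Finsupp.single j q) c
      = monomial τ c * ((X i : MvPolynomial (Fin (m + 1)) K) ^ q * X j - X i * X j ^ q) := by
    rw [mul_sub, X_pow_eq_monomial, X_pow_eq_monomial (n := j), hXi, hXj,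
      ← mul_assoc, ← mul_assoc, monomial_mul, monomial_mul, monomial_mul, monomial_mul]
    ring_nf
  rw [key]
  exact Ideal.mul_mem_left _ _ (genMem hij)

lemma lemB (hq : 2 ≤ q) (μ : Fin (m + 1) →₀ ℕ) (c : K) :
    ∃ ν : Fin (m + 1) →₀ ℕ, (∑ i, ν i = ∑ i, μ i) ∧
      (∀ i j : Fin (m + 1), i < j → ν j ≠ 0 → ν i ≤ q - 1) ∧
      monomial μ c - monomial ν c ∈ fermatIdeal q m K := by
  suffices H : ∀ (N : ℕ) (μ : Fin (m + 1) →₀ ℕ),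
      (∑ i, μ i * (m - (i : ℕ))) ≤ N →
      ∃ ν : Fin (m + 1) →₀ ℕ, (∑ i, ν i = ∑ i, μ i) ∧
        (∀ i j : Fin (m + 1), i < j → ν j ≠ 0 → ν i ≤ q - 1) ∧
        monomial μ c - monomial ν c ∈ fermatIdeal q m K by
    exact H _ μ le_rfl
  intro N
  induction N with
  | zero =>
    intro μ hμ
    refine ⟨μ, rfl, fun i j hij _ => ?_, by simp [Ideal.zero_mem]⟩
    have hi0 : μ i * (m - (i : ℕ)) = 0 := by
      have := Finset.sum_eq_zero_iff.mp (Nat.le_zero.mp hμ) i (Finset.mem_univ i)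
      exact this
    have : (i : ℕ) < (j : ℕ) := hij
    have hj : (j : ℕ) ≤ m := Nat.lt_succ_iff.mp j.isLt
    have : μ i = 0 := by
      rcases Nat.mul_eq_zero.mp hi0 with h | h
      · exact h
      · omega
    omega
  | succ N ih =>
    intro μ hμ
    by_cases hred : ∀ i j : Fin (m + 1), i < j → μ j ≠ 0 → μ i ≤ q - 1
    · exact ⟨μ, rfl, hred, by simp [Ideal.zero_mem]⟩
    push_neg at hred
    obtain ⟨i, j, hij, hμj, hμi⟩ := hred
    have hiq : q ≤ μ i := by omega
    have hne : i ≠ j := ne_of_lt hij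
    have hijv : (i : ℕ) < (j : ℕ) := hij
    have hjm : (j : ℕ) ≤ m := Nat.lt_succ_iff.mp j.isLt
    set μ' : Fin (m + 1) →₀ ℕ := Finsupp.equivFunOnFinite.symm
      (fun k => if k = i then μ i - (q - 1) else if k = j then μ j + (q - 1) else μ k) with hμ'def
    have happ : ∀ k, μ' k = if k = i then μ i - (q - 1) else if k = j then μ j + (q - 1) else μ k :=
      fun k => rfl
    -- measure identity
    have hsum : ∀ (w : Fin (m + 1) → ℕ),
        ∑ k, μ' k * w k + (q - 1) * w i = ∑ k, μ k * w k + (q - 1) * w j := by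
      intro w
      have h1 : ∀ k ∈ Finset.univ, μ' k * w k + (if k = i then (q - 1) * w i else 0)
          = μ k * w k + (if k = j then (q - 1) * w j else 0) := by
        intro k _
        rcases eq_or_ne k i with rfl | hki
        · simp only [happ]
          simp [hne]
          rw [← add_mul, Nat.sub_add_cancel (by omega)]
        · rcases eq_or_ne k j with rfl | hkj
          · simp only [happ]
            simp [hki, Ne.symm hne]
            rw [add_mul]
          · simp [happ, hki, hkj]
      have := Finset.sum_congr rfl h1
      rw [Finset.sum_add_distrib, Finset.sum_add_distrib,
        Finset.sum_ite_eq' Finset.univ i (fun _ => (q - 1) * w i),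
        Finset.sum_ite_eq' Finset.univ j (fun _ => (q - 1) * w j)] at this
      simpa using this
    have hdeg : ∑ k, μ' k = ∑ k, μ k := by
      have := hsum (fun _ => 1)
      simpa using this
    have hmeas : ∑ k, μ' k * (m - (k : ℕ)) ≤ N := by
      have h := hsum (fun k => m - (k : ℕ))
      have hlt : (q - 1) * (m - (j : ℕ)) < (q - 1) * (m - (i : ℕ)) :=
        mul_lt_mul_of_pos_left (by omega) (by omega)
      omega
    obtain ⟨ν, hν1, hν2, hν3⟩ := ih μ' hmeas
    set τ : Fin (m + 1) →₀ ℕ := Finsupp.equivFunOnFinite.symm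
      (fun k => if k = i then μ i - q else if k = j then μ j - 1 else μ k) with hτdef
    have hτapp : ∀ k, τ k = if k = i then μ i - q else if k = j then μ j - 1 else μ k :=
      fun k => rfl
    have hμeq : μ = τ + Finsupp.single i q + Finsupp.single j 1 := by
      ext k
      simp only [Finsupp.add_apply, hτapp, Finsupp.single_apply]
      rcases eq_or_ne k i with rfl | hki
      · simp [hne, Ne.symm hne] <;> omega
      · rcases eq_or_ne k j with rfl | hkj
        · simp [hki, Ne.symm hki] <;> omega
        · simp [hki, hkj, Ne.symm hki, Ne.symm hkj] <;> omega
    have hμ'eq : μ' = τ + Finsupp.single i 1 + Finsupp.single j q := by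
      ext k
      simp only [Finsupp.add_apply, hτapp, happ, Finsupp.single_apply]
      rcases eq_or_ne k i with rfl | hki
      · simp [hne, Ne.symm hne] <;> omega
      · rcases eq_or_ne k j with rfl | hkj
        · simp [hki, Ne.symm hki] <;> omega
        · simp [hki, hkj, Ne.symm hki, Ne.symm hkj] <;> omega
    have hstep : monomial μ c - monomial μ' c ∈ fermatIdeal q m K := by
      rw [hμeq, hμ'eq]
      exact lemA τ hij c
    refine ⟨ν, hν1.trans hdeg, hν2, ?_⟩
    have : monomial μ c - monomial ν c
        = (monomial μ c - monomial μ' c) + (monomial μ' c - monomial ν c) := by ring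
    rw [this]
    exact Ideal.add_mem _ hstep hν3

lemma eval_fermatIdeal {q m : ℕ} {K : Type} [Field K] [Fintype K] (hq : Fintype.card K = q)
    {f : MvPolynomial (Fin (m + 1)) K} (hf : f ∈ fermatIdeal q m K) (x : Fin (m + 1) → K) :
    eval x f = 0 := by
  have hle : fermatIdeal q m K ≤ RingHom.ker (eval x) := by
    rw [fermatIdeal, Ideal.span_le]
    rintro g ⟨i, j, hij, rfl⟩
    simp only [SetLike.mem_coe, RingHom.mem_ker, map_sub, map_mul, map_pow, eval_X]
    rw [← hq, FiniteField.pow_card, FiniteField.pow_card, sub_self]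
  exact hle hf

lemma core {q m d : ℕ} {K : Type} [Field K] [Fintype K] (hq : Fintype.card K = q)
    (G : MvPolynomial (Fin (m + 1)) K)
    (hdeg : ∀ μ ∈ G.support, (μ : Fin (m + 1) →₀ ℕ).degree = d)
    (hred : ∀ μ ∈ G.support, ∀ i j : Fin (m + 1), i < j → μ j ≠ 0 → μ i ≤ q - 1)
    (hvan : ∀ x : Fin (m + 1) → K, x ≠ 0 → eval x G = 0) : G = 0 := by
  classical
  have main : ∀ ℓ : ℕ, ∀ μ ∈ G.support, ∃ j : Fin (m + 1), ℓ < (j : ℕ) ∧ μ j ≠ 0 := by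
    intro ℓ
    induction ℓ using Nat.strong_induction_on with
    | _ ℓ ih =>
    intro μ₀ hμ₀
    by_contra hcon
    push_neg at hcon
    -- hcon : ∀ j, ℓ < (j : ℕ) → μ₀ j = 0
    rcases lt_or_ge m ℓ with hml | hml
    · obtain ⟨j, hj, _⟩ := ih m hml μ₀ hμ₀
      exact absurd hj (by omega)
    set L : Fin (m + 1) := ⟨ℓ, by omega⟩ with hL
    set s : Fin (m + 1) → MvPolynomial (Fin (m + 1)) K :=
      fun k => if k < L then X k else if k = L then 1 else 0 with hs
    set h : MvPolynomial (Fin (m + 1)) K := eval₂ C s G with hh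
    set T : Finset (Fin (m + 1) →₀ ℕ) :=
      G.support.filter (fun μ => ∀ j : Fin (m + 1), L < j → μ j = 0) with hT
    have hμ₀T : μ₀ ∈ T := by
      rw [hT, Finset.mem_filter]
      exact ⟨hμ₀, fun j hj => hcon j hj⟩
    have hLv : (L : ℕ) = ℓ := rfl
    have hTL : ∀ μ ∈ T, ∀ i : Fin (m + 1), i < L → μ L ≠ 0 := by
      intro μ hμ i hiL
      rw [hT, Finset.mem_filter] at hμ
      obtain ⟨hμs, hμtop⟩ := hμ
      have hiLv : (i : ℕ) < (L : ℕ) := Fin.lt_def.mp hiL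
      have hℓpos : 0 < ℓ := by omega
      obtain ⟨j, hj1, hj2⟩ := ih (ℓ - 1) (by omega) μ hμs
      have hjle : (j : ℕ) ≤ ℓ := by
        by_contra hjgt
        exact hj2 (hμtop j (Fin.lt_def.mpr (by omega)))
      have : j = L := Fin.ext (by omega)
      rwa [this] at hj2
    -- step 1 : h as a sum of monomials
    have hstep1 : h = ∑ μ ∈ T, monomial (Finsupp.erase L μ) (coeff μ G) := by
      rw [hh, eval₂_eq]
      rw [← Finset.sum_filter_of_ne
        (p := fun μ => ∀ j : Fin (m + 1), L < j → μ j = 0)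
        (fun μ hμs hne => ?_)]
      · -- equal term-by-term on T
        refine Finset.sum_congr rfl fun μ hμT => ?_
        have hμtop : ∀ j : Fin (m + 1), L < j → μ j = 0 :=
          (Finset.mem_filter.mp hμT).2
        rw [monomial_eq]
        congr 1
        rw [Finsupp.prod]
        rw [Finsupp.support_erase]
        have h1 : ∏ i ∈ μ.support.erase L, (X i ^ (Finsupp.erase L μ) i : MvPolynomial (Fin (m + 1)) K)
            = ∏ i ∈ μ.support.erase L, s i ^ μ i := by
          refine Finset.prod_congr rfl fun i hi => ?_
          obtain ⟨hiL, his⟩ := Finset.mem_erase.mp hi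
          have hile : ¬ (L < i) := fun hgt => (Finsupp.mem_support_iff.mp his) (hμtop i hgt)
          have hilt : i < L := lt_of_le_of_ne (not_lt.mp hile) hiL
          rw [Finsupp.erase_ne hiL, hs]
          simp [hilt]
        rw [h1]
        refine (Finset.prod_erase _ ?_).symm
        rw [hs]
        simp
      · -- terms outside T vanish
        intro j hjL
        by_contra hjne
        apply hne
        have : (s j : MvPolynomial (Fin (m + 1)) K) ^ μ j = 0 := by
          rw [hs]
          simp only [if_neg (asymm hjL), if_neg (ne_of_gt hjL)]
          exact zero_pow hjne
        rw [Finset.prod_eq_zero (Finsupp.mem_support_iff.mpr hjne) this, mul_zero]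
    -- injectivity of erase L on T
    have hinj : ∀ μ ∈ T, ∀ μ' ∈ T, Finsupp.erase L μ = Finsupp.erase L μ' → μ = μ' := by
      intro μ hμ μ' hμ' heq
      have hd : ∑ k, μ k = ∑ k, μ' k := by
        rw [← degree_eq_sum_univ, ← degree_eq_sum_univ,
          hdeg μ (Finset.mem_filter.mp hμ).1, hdeg μ' (Finset.mem_filter.mp hμ').1]
      have hsplit : ∀ ν : Fin (m + 1) →₀ ℕ,
          ∑ k, ν k = ∑ k, (Finsupp.erase L ν) k + ν L := by
        intro ν
        have : ∀ k ∈ Finset.univ, (ν k : ℕ)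
            = (Finsupp.erase L ν) k + (if k = L then ν L else 0) := by
          intro k _
          rcases eq_or_ne k L with rfl | hk
          · simp [Finsupp.erase_same]
          · simp [Finsupp.erase_ne hk, hk]
        rw [Finset.sum_congr rfl this, Finset.sum_add_distrib,
          Finset.sum_ite_eq' Finset.univ L (fun _ => ν L)]
        simp
      have hL' : μ L = μ' L := by
        have h1 := hsplit μ
        have h2 := hsplit μ'
        rw [heq] at h1
        omega
      ext k
      rcases eq_or_ne k L with rfl | hk
      · exact hL'
      · have := DFunLike.congr_fun heq k
        simpa [Finsupp.erase_ne hk] using this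
    -- h has nonzero coefficient
    have hcoeff : coeff (Finsupp.erase L μ₀) h = coeff μ₀ G := by
      rw [hstep1, coeff_sum]
      rw [Finset.sum_eq_single μ₀]
      · rw [coeff_monomial, if_pos rfl]
      · intro μ hμT hμne
        rw [coeff_monomial, if_neg]
        exact fun heq => hμne (hinj μ hμT μ₀ hμ₀T heq)
      · exact fun hc => absurd hμ₀T hc
    have hne0 : h ≠ 0 := by
      intro h0
      rw [h0, coeff_zero] at hcoeff
      exact (Finsupp.mem_support_iff.mp hμ₀).elim hcoeff.symm
    -- h is degree-restricted
    have hrestrict : h ∈ restrictDegree (Fin (m + 1)) K (Fintype.card K - 1) := by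
      rw [mem_restrictDegree]
      intro ν hν i
      have hνT : ∃ μ ∈ T, ν = Finsupp.erase L μ := by
        have := MvPolynomial.support_sum (hstep1 ▸ hν)
        obtain ⟨μ, hμT, hνμ⟩ := Finset.mem_biUnion.mp this
        refine ⟨μ, hμT, ?_⟩
        by_cases hc : coeff μ G = 0
        · simp [support_monomial, hc] at hνμ
        · simp [support_monomial, hc] at hνμ
          exact hνμ
      obtain ⟨μ, hμT, rfl⟩ := hνT
      rcases lt_trichotomy i L with hiL | hiL | hiL
      · rw [Finsupp.erase_ne (ne_of_lt hiL)]
        have hμL : μ L ≠ 0 := hTL μ hμT i hiL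
        have := hred μ (Finset.mem_filter.mp hμT).1 i L hiL hμL
        omega
      · rw [hiL, Finsupp.erase_same]
        exact Nat.zero_le _
      · rw [Finsupp.erase_ne (ne_of_gt hiL)]
        rw [(Finset.mem_filter.mp hμT).2 i hiL]
        exact Nat.zero_le _
    -- h vanishes everywhere
    have hvanh : ∀ v : Fin (m + 1) → K, eval v h = 0 := by
      intro v
      have hcomp : eval v h = eval₂ ((eval v).comp C) (fun k => eval v (s k)) G := by
        rw [hh, eval₂_comp_left (eval v) C s G]
        rfl
      have : ((eval v).comp C : K →+* K) = RingHom.id K := by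
        ext a
        simp
      rw [hcomp, this]
      have heval : eval₂ (RingHom.id K) (fun k => eval v (s k)) G
          = eval (fun k => eval v (s k)) G := rfl
      rw [heval]
      apply hvan
      intro hzero
      have : eval v (s L) = 0 := congrFun hzero L
      rw [hs] at this
      simp at this
    have : h = 0 := eq_zero_of_eval_eq_zero _ _ h hvanh hrestrict
    exact hne0 this
  -- conclude
  have hsupp : G.support = ∅ := by
    rw [Finset.eq_empty_iff_forall_notMem]
    intro μ hμ
    obtain ⟨j, hj, _⟩ := main m μ hμ
    exact absurd hj (by omega)
  exact support_eq_empty.mp hsupp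

end FermatAux

/-- Mercier–Rolland: a homogeneous polynomial over `F_q` vanishes at all `F_q`-rational
points of `P^m` iff it lies in the ideal generated by the Fermat polynomials. -/
theorem vanishing_iff_mem_fermatIdeal (q m d : ℕ)
    (K : Type) [Field K] [Fintype K] (hq : Fintype.card K = q)
    (F : MvPolynomial (Fin (m + 1)) K) (hFhom : F.IsHomogeneous d) :
    (∀ x : Fin (m + 1) → K, x ≠ 0 → MvPolynomial.eval x F = 0) ↔ F ∈ fermatIdeal q m K := by
  classical
  constructor
  · intro hvan
    have hq2 : 2 ≤ q := hq ▸ Fintype.one_lt_card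
    choose ν hν1 hν2 hν3 using fun μ : Fin (m + 1) →₀ ℕ =>
      FermatAux.lemB hq2 μ (coeff μ F) (K := K)
    set G : MvPolynomial (Fin (m + 1)) K :=
      ∑ μ ∈ F.support, monomial (ν μ) (coeff μ F) with hG
    have hFG : F - G ∈ fermatIdeal q m K := by
      have hFsum : F = ∑ μ ∈ F.support, monomial μ (coeff μ F) :=
        (support_sum_monomial_coeff F).symm
      have : F - G = ∑ μ ∈ F.support,
          (monomial μ (coeff μ F) - monomial (ν μ) (coeff μ F)) := by
        rw [Finset.sum_sub_distrib, hG, ← hFsum]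
      rw [this]
      exact Ideal.sum_mem _ fun μ _ => hν3 μ
    have hGsupp : ∀ κ ∈ G.support, ∃ μ ∈ F.support, κ = ν μ := by
      intro κ hκ
      have := MvPolynomial.support_sum (hG ▸ hκ)
      obtain ⟨μ, hμ, hκμ⟩ := Finset.mem_biUnion.mp this
      refine ⟨μ, hμ, ?_⟩
      by_cases hc : coeff μ F = 0
      · simp [support_monomial, hc] at hκμ
      · simp [support_monomial, hc] at hκμ
        exact hκμ
    have hGdeg : ∀ κ ∈ G.support, (κ : Fin (m + 1) →₀ ℕ).degree = d := by
      intro κ hκ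
      obtain ⟨μ, hμ, rfl⟩ := hGsupp κ hκ
      have hμd : (μ : Fin (m + 1) →₀ ℕ).degree = d := by
        rw [Finsupp.degree_eq_weight_one]
        exact hFhom (mem_support_iff.mp hμ)
      rw [FermatAux.degree_eq_sum_univ, hν1 μ, ← FermatAux.degree_eq_sum_univ, hμd]
    have hGred : ∀ κ ∈ G.support, ∀ i j : Fin (m + 1), i < j → κ j ≠ 0 → κ i ≤ q - 1 := by
      intro κ hκ
      obtain ⟨μ, hμ, rfl⟩ := hGsupp κ hκ
      exact hν2 μ
    have hGvan : ∀ x : Fin (m + 1) → K, x ≠ 0 → eval x G = 0 := by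
      intro x hx
      have h1 : eval x (F - G) = 0 := FermatAux.eval_fermatIdeal hq hFG x
      have h2 := hvan x hx
      rw [map_sub] at h1
      rw [h2] at h1
      rwa [zero_sub, neg_eq_zero] at h1
    have hG0 : G = 0 := FermatAux.core hq G hGdeg hGred hGvan
    have hFeq : F = F - G := by rw [hG0, sub_zero]
    rw [hFeq]
    exact hFG
  · intro hF x _
    exact FermatAux.eval_fermatIdeal hq hF x
end

section
/- Let k be an algebraic extension of F_q. The vanishing ideal over k of the set P^m(F_q) of F_q-rational points of P^m(k) is the ideal Γ_q(k) of k[x_0,...,x_m] generated by the Fermat polynomials x_i^q x_j - x_i x_j^q for 0 ≤ i < j ≤ m. -/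
open MvPolynomial Finset

theorem lemmaA {k : Type} [Field k] {Fq : Type} [Fintype Fq] [Nonempty Fq] {q : ℕ}
    (hq : Fintype.card Fq = q) (φ : Fq → k) (hφ : Function.Injective φ) :
    ∀ (n : ℕ) (H : MvPolynomial (Fin n) k),
      (∀ μ ∈ H.support, ∀ i, μ i < q) →
      (∀ y : Fin n → Fq, eval (fun i => φ (y i)) H = 0) → H = 0 := by
  have hq0 : 0 < q := hq ▸ Fintype.card_pos
  intro n
  induction n with
  | zero =>
    intro H _ hv
    have h0 := hv (fun i => i.elim0)
    rw [H.eq_C_of_isEmpty] at h0 ⊢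
    rw [eval_C] at h0
    rw [h0, map_zero]
  | succ n ih =>
    intro H hdeg hv
    set P := finSuccEquiv k n H with hP
    have hcoeff : ∀ j : ℕ, P.coeff j = 0 := by
      intro j
      apply ih
      · intro κ hκ i
        rw [mem_support_iff, finSuccEquiv_coeff_coeff] at hκ
        have := hdeg _ (mem_support_iff.mpr hκ) i.succ
        simpa using this
      · intro y
        have hPy : (P.map (eval fun i => φ (y i))) = 0 := by
          apply Polynomial.eq_zero_of_natDegree_lt_card_of_eval_eq_zero _ hφ
          · intro a
            rw [← eval_eq_eval_mv_eval']
            have hfun : (fun i => φ ((Fin.cons a y : Fin (n+1) → Fq) i)) = Fin.cons (φ a) (fun i => φ (y i)) := by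
              funext i; refine Fin.cases ?_ ?_ i <;> simp
            rw [← hfun]
            exact hv (Fin.cons a y)
          · rw [hq]
            calc (P.map (eval fun i => φ (y i))).natDegree ≤ P.natDegree :=
                  Polynomial.natDegree_map_le
              _ = H.degreeOf 0 := natDegree_finSuccEquiv H
              _ < q := by
                  rw [degreeOf_lt_iff hq0]
                  intro μ hμ; exact hdeg μ hμ 0
        have := congrArg (fun p => p.coeff j) hPy
        simpa using this
    have hP0 : P = 0 := Polynomial.ext fun j => by simp [hcoeff j]
    apply (finSuccEquiv k n).injective
    rw [map_zero, ← hP, hP0]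

theorem lemmaB {k : Type} [Field k] {Fq : Type} [Field Fq] [Fintype Fq] {q : ℕ}
    (hq : Fintype.card Fq = q) (φ : Fq →+* k) {m d : ℕ}
    (G : MvPolynomial (Fin (m + 1)) k) (hhom : G.IsHomogeneous d)
    (hred : ∀ ν ∈ G.support, ∀ i : Fin (m + 1), (∃ j, i < j ∧ ν j ≠ 0) → ν i ≤ q - 1)
    (hv : ∀ x : Fin (m + 1) → Fq, x ≠ 0 → eval (fun i => φ (x i)) G = 0) :
    G = 0 := by
  classical
  have hq2 : 2 ≤ q := hq ▸ Fintype.one_lt_card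
  have hφ : Function.Injective φ := φ.injective
  have hdeg : ∀ ρ : Fin (m + 1) →₀ ℕ, Finsupp.degree ρ = ∑ i, ρ i := fun ρ =>
    Finset.sum_subset (Finset.subset_univ _) (fun i _ hi => Finsupp.notMem_support_iff.mp hi)
  have hhom' : ∀ ν, coeff ν G ≠ 0 → ∑ i, ν i = d := by
    intro ν hν
    rw [← hdeg, Finsupp.degree_eq_weight_one]
    exact hhom hν
  have key : ∀ l : ℕ, l ≤ m → ∀ μ ∈ G.support, (∀ j : Fin (m + 1), l < (j : ℕ) → μ j = 0) →
      coeff μ G = 0 := by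
    intro l
    induction l using Nat.strong_induction_on with
    | _ l IH =>
    intro hl μ hμ hμtop
    set ℓ : Fin (m + 1) := ⟨l, by omega⟩ with hℓdef
    have hℓval : (ℓ : ℕ) = l := rfl
    -- elements of T with an index below ℓ in their support have reduced exponents
    have hT : ∀ ν ∈ G.support, (∀ j : Fin (m + 1), l < (j : ℕ) → ν j = 0) →
        ∀ i : Fin (m + 1), i < ℓ → ν i ≤ q - 1 := by
      intro ν hν hνtop i hi
      have hil : (i : ℕ) < l := hi
      by_cases hνℓ : ν ℓ = 0
      · exfalso
        refine mem_support_iff.mp hν (IH (l - 1) (by omega) (by omega) ν hν ?_)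
        intro j hj
        rcases Nat.lt_or_ge l (j : ℕ) with h | h
        · exact hνtop j h
        · have : j = ℓ := Fin.ext (by omega)
          rw [this]; exact hνℓ
      · exact hred ν hν i ⟨ℓ, hi, hνℓ⟩
    set T := G.support.filter (fun ν => ∀ j : Fin (m + 1), l < (j : ℕ) → ν j = 0) with hTdef
    set H : MvPolynomial (Fin (m + 1)) k :=
      ∑ ν ∈ T, monomial (ν.update ℓ 0) (coeff ν G) with hHdef
    have hHcoeff : ∀ κ, coeff κ H = ∑ ν ∈ T, if ν.update ℓ 0 = κ then coeff ν G else 0 := by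
      intro κ
      rw [hHdef, MvPolynomial.coeff_sum]
      exact Finset.sum_congr rfl fun ν _ => coeff_monomial κ _ _
    have hH0 : H = 0 := by
      apply lemmaA hq φ hφ (m + 1)
      · intro κ hκ i
        rw [mem_support_iff, hHcoeff] at hκ
        obtain ⟨ν, hνT, hcond⟩ : ∃ ν ∈ T, ν.update ℓ 0 = κ := by
          by_contra hc
          push_neg at hc
          exact hκ (Finset.sum_eq_zero fun ν hν => if_neg (hc ν hν))
        obtain ⟨hνG, hνtop⟩ := Finset.mem_filter.mp hνT
        rw [← hcond]
        rcases lt_trichotomy i ℓ with h | h | h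
        · have : (Finsupp.update ν ℓ 0) i = ν i := by
            simp [Finsupp.coe_update, Function.update_apply, Fin.ne_of_lt h]
          rw [this]
          have := hT ν hνG hνtop i h
          omega
        · rw [h]; simp; omega
        · have : (Finsupp.update ν ℓ 0) i = ν i := by
            simp [Finsupp.coe_update, Function.update_apply, Fin.ne_of_gt h]
          rw [this, hνtop i h]
          omega
      · intro y
        set x : Fin (m + 1) → Fq := fun i => if i < ℓ then y i else if i = ℓ then 1 else 0
          with hxdef
        have hx : x ≠ 0 := by
          intro h
          have := congrFun h ℓ
          simp [hxdef] at this
        have hGx := hv x hx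
        rw [eval_eq'] at hGx
        have hsub : ∑ ν ∈ G.support, coeff ν G * ∏ i, φ (x i) ^ ν i
            = ∑ ν ∈ T, coeff ν G * ∏ i, φ (x i) ^ ν i := by
          refine (Finset.sum_subset (Finset.filter_subset _ _) ?_).symm
          intro ν hν hνT
          have hνT' : ¬ (∀ j : Fin (m + 1), l < (j : ℕ) → ν j = 0) := fun h =>
            hνT (Finset.mem_filter.mpr ⟨hν, h⟩)
          push_neg at hνT'
          obtain ⟨j, hjl, hjν⟩ := hνT'
          have hxj : φ (x j) = 0 := by
            have h1 : ¬ j < ℓ := by intro hc; have hc' : (j : ℕ) < ℓ := hc; rw [hℓval] at hc'; omega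
            have h2 : j ≠ ℓ := by intro h; rw [h] at hjl; omega
            simp [hxdef, h1, h2]
          apply mul_eq_zero_of_right
          exact Finset.prod_eq_zero (Finset.mem_univ j) (by rw [hxj, zero_pow hjν])
        rw [hsub] at hGx
        have heH : eval (fun i => φ (y i)) H
            = ∑ ν ∈ T, coeff ν G * ∏ i, φ (y i) ^ (Finsupp.update ν ℓ 0) i := by
          rw [hHdef, map_sum]
          refine Finset.sum_congr rfl fun ν _ => ?_
          rw [eval_monomial, Finsupp.prod_fintype]
          intro i; exact pow_zero _
        rw [heH, ← hGx]
        apply Finset.sum_congr rfl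
        intro ν hνT
        obtain ⟨hνG, hνtop⟩ := Finset.mem_filter.mp hνT
        congr 1
        apply Finset.prod_congr rfl
        intro i _
        rcases lt_trichotomy i ℓ with h | h | h
        · have h1 : (Finsupp.update ν ℓ 0) i = ν i := by
            simp [Finsupp.coe_update, Function.update_apply, Fin.ne_of_lt h]
          have h2 : x i = y i := by simp [hxdef, h]
          rw [h1, h2]
        · have h1 : (Finsupp.update ν ℓ 0) i = 0 := by
            simp [h, Finsupp.coe_update, Function.update_apply]
          have h2 : x i = 1 := by simp [hxdef, h]
          rw [h1, h2, pow_zero, map_one, one_pow]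
        · have h1 : (Finsupp.update ν ℓ 0) i = ν i := by
            simp [Finsupp.coe_update, Function.update_apply, Fin.ne_of_gt h]
          rw [h1, hνtop i h, pow_zero, pow_zero]
    -- extract the coefficient of μ
    have hμT : μ ∈ T := Finset.mem_filter.mpr ⟨hμ, hμtop⟩
    have h0 : coeff (μ.update ℓ 0) H = 0 := by rw [hH0, coeff_zero]
    rw [hHcoeff] at h0
    by_cases hcμ : coeff μ G = 0
    · exact hcμ
    rw [Finset.sum_eq_single μ] at h0
    · rwa [if_pos rfl] at h0
    · intro ν hνT hνμ
      rw [if_neg]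
      intro hc
      apply hνμ
      obtain ⟨hνG, hνtop⟩ := Finset.mem_filter.mp hνT
      have hoff : ∀ i : Fin (m + 1), i ≠ ℓ → ν i = μ i := by
        intro i hi
        have := DFunLike.congr_fun hc i
        simpa [Finsupp.coe_update, Function.update_apply, hi] using this
      have hνd := hhom' ν (mem_support_iff.mp hνG)
      have hμd := hhom' μ hcμ
      have e1 : ∑ i ∈ Finset.univ.erase ℓ, ν i + ν ℓ = d := by
        rw [Finset.sum_erase_add _ _ (Finset.mem_univ ℓ)]; exact hνd
      have e2 : ∑ i ∈ Finset.univ.erase ℓ, μ i + μ ℓ = d := by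
        rw [Finset.sum_erase_add _ _ (Finset.mem_univ ℓ)]; exact hμd
      have e3 : ∑ i ∈ Finset.univ.erase ℓ, ν i = ∑ i ∈ Finset.univ.erase ℓ, μ i :=
        Finset.sum_congr rfl fun i hi => hoff i (Finset.ne_of_mem_erase hi)
      have hℓeq : ν ℓ = μ ℓ := by omega
      ext i
      by_cases hi : i = ℓ
      · rw [hi]; exact hℓeq
      · exact hoff i hi
    · intro h; exact absurd hμT h
  ext ν
  rw [coeff_zero]
  by_cases hν : ν ∈ G.support
  · exact key m le_rfl ν hν (fun j hj => absurd j.isLt (by omega))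
  · exact notMem_support_iff.mp hν

lemma redExp_le (q a : ℕ) : redExp q a ≤ a := by
  unfold redExp
  split
  · omega
  · have := Nat.mod_le (a - 1) (q - 1)
    omega

lemma redExp_le_sub_one {q : ℕ} (hq : 2 ≤ q) (a : ℕ) : redExp q a ≤ q - 1 := by
  unfold redExp
  split
  · omega
  · have : (a - 1) % (q - 1) < q - 1 := Nat.mod_lt _ (by omega)
    omega

lemma redExp_eq_zero {q a : ℕ} (h : redExp q a = 0) : a = 0 := by
  unfold redExp at h
  split at h <;> omega

lemma redExp_shift {q : ℕ} (hq : 2 ≤ q) {a : ℕ} (ha : q ≤ a) :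
    redExp q (a - (q - 1)) = redExp q a := by
  have h1 : a - 1 = (q - 1) + (a - q) := by omega
  unfold redExp
  by_cases h2 : a - (q - 1) ≤ q - 1
  · rw [if_pos h2, if_neg (show ¬ a ≤ q - 1 by omega), h1, Nat.add_mod_left,
      Nat.mod_eq_of_lt (show a - q < q - 1 by omega)]
    omega
  · rw [if_neg h2, if_neg (show ¬ a ≤ q - 1 by omega)]
    have h3 : a - (q - 1) - 1 = a - q := by omega
    rw [h3, h1, Nat.add_mod_left]

lemma mem1 {q m : ℕ} {k : Type} [CommRing k] (hq : 2 ≤ q) {i ℓ : Fin (m + 1)} (hiℓ : i < ℓ) :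
    ∀ a b : ℕ, 1 ≤ b →
      X i ^ a * X ℓ ^ b - X i ^ (redExp q a) * X ℓ ^ (b + (a - redExp q a))
        ∈ fermatIdeal q m k := by
  intro a
  induction a using Nat.strong_induction_on with
  | _ a IH =>
  intro b hb
  by_cases ha : a ≤ q - 1
  · rw [redExp, if_pos ha]
    simp
  · have haq : q ≤ a := by omega
    have step : X i ^ a * X ℓ ^ b - X i ^ (a - (q - 1)) * X ℓ ^ (b + (q - 1))
        ∈ fermatIdeal q m k := by
      obtain ⟨a', rfl⟩ : ∃ a', a = a' + q := ⟨a - q, by omega⟩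
      obtain ⟨b', rfl⟩ : ∃ b', b = b' + 1 := ⟨b - 1, by omega⟩
      have e1 : a' + q - (q - 1) = a' + 1 := by omega
      have e2 : b' + 1 + (q - 1) = b' + q := by omega
      rw [e1, e2]
      have eid : X i ^ (a' + q) * X ℓ ^ (b' + 1) - X i ^ (a' + 1) * X ℓ ^ (b' + q)
          = (X i ^ a' * X ℓ ^ b') * (X (R := k) i ^ q * X ℓ - X i * X ℓ ^ q) := by
        ring
      rw [eid]
      exact Ideal.mul_mem_left _ _ (Ideal.subset_span ⟨i, ℓ, hiℓ, rfl⟩)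
    have ih := IH (a - (q - 1)) (by omega) (b + (q - 1)) (by omega)
    rw [redExp_shift hq haq] at ih
    have hre : redExp q a ≤ a - (q - 1) := by
      rw [← redExp_shift hq haq]
      exact redExp_le _ _
    have e3 : b + (q - 1) + (a - (q - 1) - redExp q a) = b + (a - redExp q a) := by omega
    rw [e3] at ih
    have esplit : X i ^ a * X ℓ ^ b - X i ^ (redExp q a) * X ℓ ^ (b + (a - redExp q a))
        = (X i ^ a * X ℓ ^ b - X i ^ (a - (q - 1)) * X ℓ ^ (b + (q - 1)))
          + (X i ^ (a - (q - 1)) * X ℓ ^ (b + (q - 1))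
              - X (R := k) i ^ (redExp q a) * X ℓ ^ (b + (a - redExp q a))) := by
      ring
    rw [esplit]
    exact Ideal.add_mem _ step ih

lemma memD {q m : ℕ} {k : Type} [CommRing k] (hq : 2 ≤ q) {i ℓ : Fin (m + 1)} (hiℓ : i < ℓ)
    (ν : Fin (m + 1) →₀ ℕ) (hνℓ : 1 ≤ ν ℓ) (c : k) :
    monomial ν c - monomial ((ν.update i (redExp q (ν i))).update ℓ
        (ν ℓ + (ν i - redExp q (ν i)))) c ∈ fermatIdeal q m k := by
  classical
  have hne : i ≠ ℓ := Fin.ne_of_lt hiℓ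
  set ρ : Fin (m + 1) →₀ ℕ := (ν.update i 0).update ℓ 0 with hρ
  have hsplit1 : (ρ + Finsupp.single i (ν i)) + Finsupp.single ℓ (ν ℓ) = ν := by
    ext j
    by_cases hj1 : j = i
    · subst hj1
      simp [hρ, Finsupp.coe_update, Function.update_apply, hne, Finsupp.single_apply, Ne.symm hne]
    · by_cases hj2 : j = ℓ
      · subst hj2
        simp [hρ, Finsupp.coe_update, Function.update_apply, Finsupp.single_apply, hne, Ne.symm hne]
      · simp [hρ, Finsupp.coe_update, Function.update_apply, hj1, hj2,
          Finsupp.single_apply, Ne.symm hj1, Ne.symm hj2]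
  have hsplit2 : (ρ + Finsupp.single i (redExp q (ν i)))
      + Finsupp.single ℓ (ν ℓ + (ν i - redExp q (ν i)))
      = (ν.update i (redExp q (ν i))).update ℓ (ν ℓ + (ν i - redExp q (ν i))) := by
    ext j
    by_cases hj1 : j = i
    · subst hj1
      simp [hρ, Finsupp.coe_update, Function.update_apply, hne, Finsupp.single_apply, Ne.symm hne]
    · by_cases hj2 : j = ℓ
      · subst hj2
        simp [hρ, Finsupp.coe_update, Function.update_apply, Finsupp.single_apply, hne, Ne.symm hne]
      · simp [hρ, Finsupp.coe_update, Function.update_apply, hj1, hj2,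
          Finsupp.single_apply, Ne.symm hj1, Ne.symm hj2]
  have hν1 : monomial ν c = monomial ρ c * X i ^ (ν i) * X ℓ ^ (ν ℓ) := by
    rw [X_pow_eq_monomial, X_pow_eq_monomial, monomial_mul, monomial_mul, mul_one, mul_one,
      hsplit1]
  have hν2 : monomial ((ν.update i (redExp q (ν i))).update ℓ (ν ℓ + (ν i - redExp q (ν i)))) c
      = monomial ρ c * X i ^ (redExp q (ν i)) * X ℓ ^ (ν ℓ + (ν i - redExp q (ν i))) := by
    rw [X_pow_eq_monomial, X_pow_eq_monomial, monomial_mul, monomial_mul, mul_one, mul_one,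
      hsplit2]
  rw [hν1, hν2]
  have heq : monomial ρ c * X i ^ (ν i) * X ℓ ^ (ν ℓ)
      - monomial ρ c * X i ^ (redExp q (ν i)) * X ℓ ^ (ν ℓ + (ν i - redExp q (ν i)))
      = monomial ρ c * (X i ^ (ν i) * X ℓ ^ (ν ℓ)
        - X i ^ (redExp q (ν i)) * X ℓ ^ (ν ℓ + (ν i - redExp q (ν i)))) := by ring
  rw [heq]
  exact Ideal.mul_mem_left _ _ (mem1 hq hiℓ (ν i) (ν ℓ) hνℓ)

lemma memC2 {q m : ℕ} {k : Type} [CommRing k] (hq : 2 ≤ q) (μ : Fin (m + 1) →₀ ℕ) (c : k) :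
    monomial μ c - monomial (projRed q μ) c ∈ fermatIdeal q m k := by
  classical
  rw [projRed]
  by_cases h : μ.support.Nonempty
  · rw [dif_pos h]
    set ℓ := μ.support.max' h with hℓ
    have hμℓ : 1 ≤ μ ℓ :=
      Nat.one_le_iff_ne_zero.mpr (Finsupp.mem_support_iff.mp (μ.support.max'_mem h))
    have hgt : ∀ j : Fin (m + 1), ℓ < j → μ j = 0 := by
      intro j hj
      by_contra hc
      exact absurd (μ.support.le_max' j (Finsupp.mem_support_iff.mpr hc)) (not_le.mpr hj)
    set g : Finset (Fin (m + 1)) → (Fin (m + 1) →₀ ℕ) := fun s =>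
      Finsupp.equivFunOnFinite.symm fun i =>
        if i ∈ s then redExp q (μ i)
        else if i = ℓ then μ ℓ + ∑ j ∈ s, (μ j - redExp q (μ j))
        else μ i with hg
    have hgapp : ∀ s i, g s i = if i ∈ s then redExp q (μ i)
        else if i = ℓ then μ ℓ + ∑ j ∈ s, (μ j - redExp q (μ j)) else μ i := by
      intro s i
      rw [hg]
      simp [Finsupp.equivFunOnFinite]
    have main : ∀ s : Finset (Fin (m + 1)), (∀ i ∈ s, i < ℓ) →
        monomial μ c - monomial (g s) c ∈ fermatIdeal q m k := by
      intro s
      induction s using Finset.induction_on with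
      | empty =>
        intro _
        have hg0 : g ∅ = μ := by
          ext i
          rw [hgapp]
          simp only [Finset.notMem_empty, if_false, Finset.sum_empty, add_zero]
          split
          · next hi => rw [hi]
          · rfl
        rw [hg0, sub_self]
        exact Ideal.zero_mem _
      | @insert i₀ s hi₀ IH =>
        intro hsub
        have hi₀ℓ : i₀ < ℓ := hsub i₀ (Finset.mem_insert_self _ _)
        have hs : ∀ i ∈ s, i < ℓ := fun i hi => hsub i (Finset.mem_insert_of_mem hi)
        have hℓs : ℓ ∉ s := fun hc => absurd (hs ℓ hc) (lt_irrefl ℓ)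
        have hgsℓ : g s ℓ = μ ℓ + ∑ j ∈ s, (μ j - redExp q (μ j)) := by
          rw [hgapp, if_neg hℓs, if_pos rfl]
        have hgsi₀ : g s i₀ = μ i₀ := by
          rw [hgapp, if_neg hi₀, if_neg (Fin.ne_of_lt hi₀ℓ)]
        have hstep := memD hq hi₀ℓ (g s) (by rw [hgsℓ]; omega) c
        rw [hgsi₀, hgsℓ] at hstep
        have hupd : ((g s).update i₀ (redExp q (μ i₀))).update ℓ
            ((μ ℓ + ∑ j ∈ s, (μ j - redExp q (μ j))) + (μ i₀ - redExp q (μ i₀)))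
            = g (insert i₀ s) := by
          ext j
          rw [hgapp (insert i₀ s) j]
          by_cases hj1 : j = ℓ
          · subst hj1
            rw [if_neg (show ℓ ∉ insert i₀ s by
                intro hc
                rcases Finset.mem_insert.mp hc with h' | h'
                · exact Fin.ne_of_gt hi₀ℓ h'
                · exact hℓs h'), if_pos rfl]
            simp only [Finsupp.coe_update, Function.update_apply, if_pos rfl, eq_self_iff_true,
              if_true]
            rw [Finset.sum_insert hi₀]
            omega
          · by_cases hj2 : j = i₀
            · subst hj2
              rw [if_pos (Finset.mem_insert_self _ _)]
              simp [Finsupp.coe_update, Function.update_apply, hj1]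
            · have hLHS : (((g s).update i₀ (redExp q (μ i₀))).update ℓ
                  ((μ ℓ + ∑ j ∈ s, (μ j - redExp q (μ j))) + (μ i₀ - redExp q (μ i₀)))) j
                  = g s j := by
                simp [Finsupp.coe_update, Function.update_apply, hj1, hj2]
              rw [hLHS, hgapp s j]
              by_cases hj3 : j ∈ s
              · rw [if_pos hj3, if_pos (Finset.mem_insert_of_mem hj3)]
              · rw [if_neg (show j ∉ insert i₀ s by
                  intro hc
                  rcases Finset.mem_insert.mp hc with h' | h'
                  · exact hj2 h'
                  · exact hj3 h'), if_neg hj3, if_neg hj1, if_neg hj1]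
        rw [hupd] at hstep
        have esplit : monomial μ c - monomial (g (insert i₀ s)) c
            = (monomial μ c - monomial (g s) c)
              + (monomial (g s) c - monomial (g (insert i₀ s)) c) := by ring
        rw [esplit]
        exact Ideal.add_mem _ (IH hs) hstep
    have hproj : (Finsupp.equivFunOnFinite.symm fun i =>
        if i < ℓ then redExp q (μ i)
        else if i = ℓ then μ ℓ + ∑ j ∈ Finset.univ.filter (· < ℓ), (μ j - redExp q (μ j))
        else 0) = g (Finset.univ.filter (· < ℓ)) := by
      ext i
      rw [hgapp]
      simp only [Finsupp.equivFunOnFinite, Equiv.coe_fn_symm_mk, Finset.mem_filter,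
        Finset.mem_univ, true_and]
      by_cases h1 : i < ℓ
      · simp [h1]
      · by_cases h2 : i = ℓ
        · simp [h1, h2]
        · have hℓi : ℓ < i := (not_lt.mp h1).lt_of_ne (Ne.symm h2)
          simp [h1, h2, hgt i hℓi]
    rw [hproj]
    exact main _ (fun i hi => (Finset.mem_filter.mp hi).2)
  · rw [dif_neg h]
    have h0 : μ = 0 := Finsupp.support_eq_empty.mp (Finset.not_nonempty_iff_eq_empty.mp h)
    rw [h0, sub_self]
    exact Ideal.zero_mem _

lemma projRed_apply {q m : ℕ} (μ : Fin (m + 1) →₀ ℕ) (h : μ.support.Nonempty) (i : Fin (m + 1)) :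
    projRed q μ i = if i < μ.support.max' h then redExp q (μ i)
      else if i = μ.support.max' h then
        μ (μ.support.max' h)
          + ∑ j ∈ Finset.univ.filter (· < μ.support.max' h), (μ j - redExp q (μ j))
      else 0 := by
  rw [projRed, dif_pos h]
  simp [Finsupp.equivFunOnFinite]
  rfl

lemma gt_max'_eq_zero {m : ℕ} (μ : Fin (m + 1) →₀ ℕ) (h : μ.support.Nonempty)
    {j : Fin (m + 1)} (hj : μ.support.max' h < j) : μ j = 0 := by
  by_contra hc
  exact absurd (μ.support.le_max' j (Finsupp.mem_support_iff.mpr hc)) (not_le.mpr hj)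

lemma projRed_sum {q m : ℕ} (μ : Fin (m + 1) →₀ ℕ) :
    ∑ i, projRed q μ i = ∑ i, μ i := by
  classical
  by_cases h : μ.support.Nonempty
  · set ℓ := μ.support.max' h with hℓ
    rw [← Finset.sum_filter_add_sum_filter_not Finset.univ (· < ℓ) (fun i => projRed q μ i),
      ← Finset.sum_filter_add_sum_filter_not Finset.univ (· < ℓ) (fun i => μ i)]
    have e1 : ∑ i ∈ Finset.univ.filter (· < ℓ), projRed q μ i
        = ∑ i ∈ Finset.univ.filter (· < ℓ), redExp q (μ i) := by
      refine Finset.sum_congr rfl fun i hi => ?_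
      rw [projRed_apply μ h, if_pos (Finset.mem_filter.mp hi).2]
    have e2 : ∑ i ∈ Finset.univ.filter (fun i => ¬ i < ℓ), projRed q μ i
        = μ ℓ + ∑ j ∈ Finset.univ.filter (· < ℓ), (μ j - redExp q (μ j)) := by
      calc ∑ i ∈ Finset.univ.filter (fun i => ¬ i < ℓ), projRed q μ i
          = ∑ i ∈ Finset.univ.filter (fun i => ¬ i < ℓ), (if i = ℓ then
              μ ℓ + ∑ j ∈ Finset.univ.filter (· < ℓ), (μ j - redExp q (μ j)) else 0) :=
            Finset.sum_congr rfl fun i hi => by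
              rw [projRed_apply μ h, if_neg (Finset.mem_filter.mp hi).2]
        _ = _ := by rw [Finset.sum_ite_eq', if_pos (by simp)]
    have e3 : ∑ i ∈ Finset.univ.filter (fun i => ¬ i < ℓ), μ i = μ ℓ := by
      calc ∑ i ∈ Finset.univ.filter (fun i => ¬ i < ℓ), μ i
          = ∑ i ∈ Finset.univ.filter (fun i => ¬ i < ℓ), (if i = ℓ then μ ℓ else 0) := by
            refine Finset.sum_congr rfl fun i hi => ?_
            have hi' := (Finset.mem_filter.mp hi).2
            by_cases h2 : i = ℓ
            · rw [if_pos h2, h2]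
            · rw [if_neg h2]
              exact gt_max'_eq_zero μ h ((not_lt.mp hi').lt_of_ne (Ne.symm h2))
        _ = μ ℓ := by rw [Finset.sum_ite_eq', if_pos (by simp)]
    rw [e1, e2, e3]
    have e4 : ∑ i ∈ Finset.univ.filter (· < ℓ), redExp q (μ i)
        + ∑ j ∈ Finset.univ.filter (· < ℓ), (μ j - redExp q (μ j))
        = ∑ i ∈ Finset.univ.filter (· < ℓ), μ i := by
      rw [← Finset.sum_add_distrib]
      refine Finset.sum_congr rfl fun i _ => ?_
      have := redExp_le q (μ i)
      omega
    omega
  · rw [projRed, dif_neg h]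
    have h0 : μ = 0 := Finsupp.support_eq_empty.mp (Finset.not_nonempty_iff_eq_empty.mp h)
    rw [h0]

lemma projRed_red {q m : ℕ} (hq : 2 ≤ q) (μ : Fin (m + 1) →₀ ℕ) (i : Fin (m + 1))
    (hex : ∃ j, i < j ∧ projRed q μ j ≠ 0) : projRed q μ i ≤ q - 1 := by
  classical
  obtain ⟨j, hij, hj⟩ := hex
  by_cases h : μ.support.Nonempty
  · set ℓ := μ.support.max' h with hℓ
    have hjℓ : j ≤ ℓ := by
      by_contra hc
      rw [projRed_apply μ h, if_neg (by omega), if_neg (by omega)] at hj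
      exact hj rfl
    have hiℓ : i < ℓ := lt_of_lt_of_le hij hjℓ
    rw [projRed_apply μ h, if_pos hiℓ]
    exact redExp_le_sub_one hq _
  · rw [projRed, dif_neg h] at hj
    simp at hj

lemma fermat_vanish {q m : ℕ} {k : Type} [CommRing k] {Fq : Type} [Field Fq] [Fintype Fq]
    (hq : Fintype.card Fq = q) (φ : Fq →+* k) {F : MvPolynomial (Fin (m + 1)) k}
    (hF : F ∈ fermatIdeal q m k) (x : Fin (m + 1) → Fq) :
    eval (fun i => φ (x i)) F = 0 := by
  refine Submodule.span_induction ?_ ?_ ?_ ?_ hF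
  · rintro f ⟨i, j, hij, rfl⟩
    have hpow : ∀ a : Fq, φ a ^ q = φ a := fun a => by
      rw [← map_pow, ← hq, FiniteField.pow_card]
    simp only [map_sub, map_mul, map_pow, eval_X]
    rw [hpow, hpow]
    ring
  · simp
  · intro f g _ _ hf hg
    simp [hf, hg]
  · intro a f _ hf
    rw [smul_eq_mul, map_mul, hf, mul_zero]

/-- For an algebraic extension `k` of `F_q`, the vanishing ideal over `k` of the set of
`F_q`-rational points of `P^m(k)` (the ideal generated by homogeneous polynomials vanishing
at every `F_q`-point) is the ideal generated by the Fermat polynomials. -/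
theorem vanishing_ideal_eq_fermatIdeal (q m : ℕ)
    (Fq : Type) [Field Fq] [Fintype Fq] (hq : Fintype.card Fq = q)
    (k : Type) [Field k] [Algebra Fq k] [Algebra.IsAlgebraic Fq k] :
    Ideal.span {F : MvPolynomial (Fin (m + 1)) k |
        (∃ d, F.IsHomogeneous d) ∧
        ∀ x : Fin (m + 1) → Fq, x ≠ 0 →
          MvPolynomial.eval (fun i => algebraMap Fq k (x i)) F = 0}
      = fermatIdeal q m k := by
  classical
  have hq2 : 2 ≤ q := hq ▸ Fintype.one_lt_card
  apply le_antisymm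
  · rw [Ideal.span_le]
    rintro F ⟨⟨d, hFd⟩, hFv⟩
    set G := polyRed q F with hG
    have hFG : F - G ∈ fermatIdeal q m k := by
      have hFsum : ∑ μ ∈ F.support, monomial μ (coeff μ F) = F :=
        F.support_sum_monomial_coeff
      have hsplit : F - G = ∑ μ ∈ F.support,
          (monomial μ (coeff μ F) - monomial (projRed q μ) (coeff μ F)) := by
        rw [Finset.sum_sub_distrib, hFsum, hG, polyRed]
      rw [hsplit]
      exact Ideal.sum_mem _ fun μ _ => memC2 hq2 μ _
    have hGsupp : ∀ ν ∈ G.support, ∃ μ ∈ F.support, projRed q μ = ν := by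
      intro ν hν
      by_contra hc
      push_neg at hc
      apply mem_support_iff.mp hν
      rw [hG, polyRed, MvPolynomial.coeff_sum]
      refine Finset.sum_eq_zero fun μ hμ => ?_
      rw [coeff_monomial, if_neg (hc μ hμ)]
    have hw : ∀ ρ : Fin (m + 1) →₀ ℕ, (Finsupp.weight (1 : Fin (m + 1) → ℕ)) ρ = ∑ i, ρ i := by
      intro ρ
      change (Finsupp.weight (fun _ => (1 : ℕ))) ρ = ∑ i, ρ i
      rw [← Finsupp.degree_eq_weight_one]
      exact Finset.sum_subset (Finset.subset_univ _)
        (fun i _ hi => Finsupp.notMem_support_iff.mp hi)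
    have hGhom : G.IsHomogeneous d := by
      intro ν hν
      obtain ⟨μ, hμ, rfl⟩ := hGsupp ν (mem_support_iff.mpr hν)
      have hμd := hFd (mem_support_iff.mp hμ)
      rw [hw] at hμd ⊢
      rw [projRed_sum, hμd]
    have hGred : ∀ ν ∈ G.support, ∀ i : Fin (m + 1), (∃ j, i < j ∧ ν j ≠ 0) → ν i ≤ q - 1 := by
      intro ν hν i hex
      obtain ⟨μ, hμ, rfl⟩ := hGsupp ν hν
      exact projRed_red hq2 μ i hex
    have hGv : ∀ x : Fin (m + 1) → Fq, x ≠ 0 →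
        eval (fun i => algebraMap Fq k (x i)) G = 0 := by
      intro x hx
      have h1 := hFv x hx
      have h2 := fermat_vanish hq (algebraMap Fq k) hFG x
      have hGFG : G = F - (F - G) := by ring
      rw [hGFG, map_sub, h1, h2, sub_zero]
    have hG0 : G = 0 := lemmaB hq (algebraMap Fq k) G hGhom hGred hGv
    have hFFG : F = F - G := by rw [hG0, sub_zero]
    rw [hFFG]
    exact hFG
  · rw [fermatIdeal, Ideal.span_le]
    rintro f ⟨i, j, hij, rfl⟩
    apply Ideal.subset_span
    constructor
    · refine ⟨q + 1, ?_⟩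
      have h1 : ((X i ^ q * X j : MvPolynomial (Fin (m + 1)) k)).IsHomogeneous (q + 1) :=
        (isHomogeneous_X_pow _ _).mul (isHomogeneous_X _ _)
      have h2 : ((X i * X j ^ q : MvPolynomial (Fin (m + 1)) k)).IsHomogeneous (q + 1) := by
        have h := (isHomogeneous_X k i).mul (isHomogeneous_X_pow (R := k) j q)
        have e : 1 + q = q + 1 := add_comm 1 q
        exact e ▸ h
      exact h1.sub h2
    · intro x hx
      have hpow : ∀ a : Fq, (algebraMap Fq k) a ^ q = algebraMap Fq k a := fun a => by
        rw [← map_pow, ← hq, FiniteField.pow_card]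
      simp only [map_sub, map_mul, map_pow, eval_X]
      rw [hpow, hpow]
      ring
end

section
/- If F is a nonzero polynomial over an algebraic extension k of F_q whose leading monomial (with respect to a monomial order with x_0 ≻ ... ≻ x_m) is projectively reduced, then the projective reduction F̄ of F is nonzero and has the same leading monomial as F. -/
open MvPolynomial Finset

lemma toSyn_projRed_le (q m : ℕ) (mo : MonomialOrder (Fin (m+1)))
    (hvar : ∀ i j : Fin (m + 1), i < j →
      mo.toSyn (Finsupp.single j 1) < mo.toSyn (Finsupp.single i 1))
    (μ : Fin (m+1) →₀ ℕ) : mo.toSyn (projRed q μ) ≤ mo.toSyn μ := by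
  by_cases h : μ.support.Nonempty
  · set ℓ := μ.support.max' h with hℓ
    set d : Fin (m+1) → ℕ := fun j => if j < ℓ then μ j - redExp q (μ j) else 0 with hd
    have key : projRed q μ + ∑ j, Finsupp.single j (d j)
        = μ + ∑ j, Finsupp.single ℓ (d j) := by
      ext i
      have hsum : (∑ j, Finsupp.single j (d j)) i = d i := by
        rw [Finsupp.finset_sum_apply]
        simp [Finsupp.single_apply]
      have hsum2 : (∑ j, (Finsupp.single ℓ (d j) : Fin (m+1) →₀ ℕ)) i
          = if ℓ = i then ∑ j, d j else 0 := by
        rw [Finsupp.finset_sum_apply]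
        simp [Finsupp.single_apply, Finset.sum_ite_irrel]
      rw [Finsupp.add_apply, Finsupp.add_apply, hsum, hsum2]
      have hpr : projRed q μ i = if i < ℓ then redExp q (μ i)
          else if i = ℓ then μ ℓ + ∑ j ∈ Finset.univ.filter (· < ℓ), (μ j - redExp q (μ j))
          else 0 := by
        simp [projRed, h, ← hℓ]
      rcases lt_trichotomy i ℓ with hi | hi | hi
      · rw [hpr, if_pos hi, if_neg (by omega : ¬ ℓ = i), hd]
        simp only [if_pos hi]
        have := redExp_le q (μ i)
        omega
      · subst hi
        rw [hpr, if_neg (lt_irrefl _), if_pos rfl, if_pos rfl]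
        have hdℓ : d ℓ = 0 := by simp [hd]
        rw [hdℓ, Finset.sum_filter]
        simp [hd]
      · have hμi : μ i = 0 := by
          by_contra hne
          have : i ∈ μ.support := Finsupp.mem_support_iff.mpr hne
          exact absurd (Finset.le_max' _ _ this) (not_le.mpr hi)
        have hdi : d i = 0 := by simp [hd, if_neg (not_lt.mpr hi.le)]
        rw [hpr, if_neg (not_lt.mpr hi.le), if_neg hi.ne', if_neg hi.ne, hμi, hdi]
    have keySyn : mo.toSyn (projRed q μ) + ∑ j, mo.toSyn (Finsupp.single j (d j))
        = mo.toSyn μ + ∑ j, mo.toSyn (Finsupp.single ℓ (d j)) := by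
      have := congrArg mo.toSyn key
      simpa [map_add, map_sum] using this
    have hterm : ∀ j : Fin (m+1), mo.toSyn (Finsupp.single ℓ (d j))
        ≤ mo.toSyn (Finsupp.single j (d j)) := by
      intro j
      by_cases hj : j < ℓ
      · have h1 : Finsupp.single ℓ (d j) = d j • Finsupp.single ℓ 1 := by
          rw [Finsupp.smul_single, smul_eq_mul, mul_one]
        have h2 : Finsupp.single j (d j) = d j • Finsupp.single j 1 := by
          rw [Finsupp.smul_single, smul_eq_mul, mul_one]
        rw [h1, h2, map_nsmul, map_nsmul]
        exact nsmul_le_nsmul_right (le_of_lt (hvar j ℓ hj)) _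
      · simp [hd, if_neg hj]
    have := Finset.sum_le_sum (fun j (_ : j ∈ Finset.univ) => hterm j)
    have h2 : mo.toSyn μ + ∑ j, mo.toSyn (Finsupp.single ℓ (d j))
        ≤ mo.toSyn μ + ∑ j, mo.toSyn (Finsupp.single j (d j)) := by
      exact add_le_add le_rfl this
    rw [← keySyn] at h2
    exact le_of_add_le_add_right h2
  · have : μ = 0 := by
      ext i; by_contra hne
      exact h ⟨i, Finsupp.mem_support_iff.mpr hne⟩
    simp [projRed, h, this]

/-- If the leading monomial of a nonzero polynomial `F` over an algebraic extension `k` of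
`F_q` is projectively reduced, then the projective reduction of `F` is nonzero and has the
same leading monomial as `F`. -/
theorem polyRed_lmExp (q m : ℕ)
    (Fq : Type) [Field Fq] [Fintype Fq] (hq : Fintype.card Fq = q)
    (k : Type) [Field k] [Algebra Fq k] [Algebra.IsAlgebraic Fq k]
    (mo : MonomialOrder (Fin (m + 1)))
    (hvar : ∀ i j : Fin (m + 1), i < j →
      mo.toSyn (Finsupp.single j 1) < mo.toSyn (Finsupp.single i 1))
    (F : MvPolynomial (Fin (m + 1)) k) (hF : F ≠ 0)
    (hlm : projRed q (lmExp mo F) = lmExp mo F) :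
    polyRed q F ≠ 0 ∧ lmExp mo (polyRed q F) = lmExp mo F := by
  have hsupp : F.support.Nonempty := MvPolynomial.support_nonempty.mpr hF
  set ν := lmExp mo F with hν
  have htν : mo.toSyn ν = F.support.sup fun μ => mo.toSyn μ := by
    rw [hν, lmExp, AddEquiv.apply_symm_apply]
  obtain ⟨μ₀, hμ₀mem, hμ₀⟩ := Finset.exists_mem_eq_sup F.support hsupp fun μ => mo.toSyn μ
  have hνmem : ν ∈ F.support := by
    have : mo.toSyn ν = mo.toSyn μ₀ := by rw [htν, hμ₀]
    rwa [mo.toSyn.injective this]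
  -- every support element's reduction is ≤ ν, with equality iff it equals ν
  have hle : ∀ μ ∈ F.support, mo.toSyn μ ≤ mo.toSyn ν := fun μ hμ => by
    rw [htν]; exact Finset.le_sup hμ
  have hiff : ∀ μ ∈ F.support, (projRed q μ = ν ↔ μ = ν) := by
    intro μ hμ
    constructor
    · intro hpr
      have h1 : mo.toSyn ν ≤ mo.toSyn μ := by
        rw [← hpr]; exact toSyn_projRed_le q m mo hvar μ
      exact mo.toSyn.injective (le_antisymm (hle μ hμ) h1)
    · rintro rfl; exact hlm
  have hcoeff : coeff ν (polyRed q F) = coeff ν F := by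
    rw [polyRed, MvPolynomial.coeff_sum]
    rw [Finset.sum_congr rfl (fun μ hμ => by
      rw [coeff_monomial, if_congr (hiff μ hμ) rfl rfl])]
    rw [Finset.sum_ite_eq' F.support ν (fun μ => coeff μ F), if_pos hνmem]
  have hcν : coeff ν F ≠ 0 := MvPolynomial.mem_support_iff.mp hνmem
  have hne : polyRed q F ≠ 0 := fun h0 => hcν (by rw [← hcoeff, h0, coeff_zero])
  refine ⟨hne, ?_⟩
  have hνmem' : ν ∈ (polyRed q F).support :=
    MvPolynomial.mem_support_iff.mpr (by rw [hcoeff]; exact hcν)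
  have hsub : (polyRed q F).support ⊆ F.support.biUnion
      fun μ => (monomial (projRed q μ) (coeff μ F)).support := by
    rw [polyRed]; exact MvPolynomial.support_sum
  have hsup_le : ((polyRed q F).support.sup fun μ => mo.toSyn μ) ≤ mo.toSyn ν := by
    apply Finset.sup_le
    intro μ' hμ'
    obtain ⟨μ, hμ, hμ'2⟩ := Finset.mem_biUnion.mp (hsub hμ')
    have : μ' = projRed q μ := by
      have := MvPolynomial.support_monomial_subset hμ'2
      simpa using this
    rw [this]
    exact le_trans (toSyn_projRed_le q m mo hvar μ) (hle μ hμ)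
  have hsup_ge : mo.toSyn ν ≤ (polyRed q F).support.sup fun μ => mo.toSyn μ :=
    Finset.le_sup hνmem'
  rw [lmExp, hν, lmExp]
  congr 1
  rw [← htν]
  exact le_antisymm hsup_le hsup_ge
end
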